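/- In the pre-Lie algebra of $S$-colored rooted trees with grafting product $\rhd$, for connected trees $a, b, c$ the coefficient of a tree $s$ in $a \rhd (b \rhd c) - (a \rhd b) \rhd c$ equals the number of admissible two-edge cuts $\{e_1, e_2\}$ of $s$ (no root-to-leaf path contains both edges) such that the component containing the root of $s$ is isomorphic to $c$ and the other two components are isomorphic to $a$ and $b$ respectively. In particular this coefficient is symmetric in $a$ and $b$. -/

import Mathlib

/-- An `S`-colored rooted tree on the vertex set `Fin (n+1)`, given by a parent
function (with root `0`, and each non-root vertex's parent strictly smaller, which
makes the graph an acyclic rooted tree) together with a coloring of the vertices. -/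
def PreTree (S : Type) (n : ℕ) : Type :=
  {pc : (Fin (n+1) → Fin (n+1)) × (Fin (n+1) → S) //
    pc.1 0 = 0 ∧ ∀ i, i ≠ 0 → pc.1 i < i}

instance (S : Type) (n : ℕ) [DecidableEq S] [Fintype S] : Fintype (PreTree S n) := by
  unfold PreTree; infer_instance

/-- `desc t v i` : `v` is an ancestor of `i` (or `i` itself), i.e. `i` lies in the
subtree below `v`; equivalently, `i` is separated from the root when the edge above
`v` is cut. -/
def desc {S : Type} {n : ℕ} (t : PreTree S n) (v i : Fin (n+1)) : Prop :=
  ∃ k ∈ Finset.range (n+2), (t.1.1)^[k] i = v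

instance {S : Type} {n : ℕ} (t : PreTree S n) (v i : Fin (n+1)) :
    Decidable (desc t v i) := by unfold desc; infer_instance

/-- `IsoBelow a t v` : the subtree `P_e(t)` of `t` hanging below the edge `e` above
`v` is isomorphic to `a` as an `S`-colored rooted tree. -/
def IsoBelow {S : Type} {p m : ℕ} (a : PreTree S p) (t : PreTree S m)
    (v : Fin (m+1)) : Prop :=
  ∃ f : Fin (p+1) → Fin (m+1),
    Function.Injective f ∧ f 0 = v ∧
    (∀ j, desc t v j ↔ ∃ i, f i = j) ∧
    (∀ i, i ≠ 0 → t.1.1 (f i) = f (a.1.1 i)) ∧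
    (∀ i, t.1.2 (f i) = a.1.2 i)

instance {S : Type} [DecidableEq S] {p m : ℕ} (a : PreTree S p) (t : PreTree S m)
    (v : Fin (m+1)) : Decidable (IsoBelow a t v) := by
  unfold IsoBelow; infer_instance

/-- `IsoAbove b t v` : the complementary component `R_e(t)` containing the root,
obtained by cutting the edge above `v`, is isomorphic to `b` as an `S`-colored
rooted tree. -/
def IsoAbove {S : Type} {q m : ℕ} (b : PreTree S q) (t : PreTree S m)
    (v : Fin (m+1)) : Prop :=
  ∃ g : Fin (q+1) → Fin (m+1),
    Function.Injective g ∧ g 0 = 0 ∧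
    (∀ j, ¬ desc t v j ↔ ∃ i, g i = j) ∧
    (∀ i, i ≠ 0 → t.1.1 (g i) = g (b.1.1 i)) ∧
    (∀ i, t.1.2 (g i) = b.1.2 i)

instance {S : Type} [DecidableEq S] {q m : ℕ} (b : PreTree S q) (t : PreTree S m)
    (v : Fin (m+1)) : Decidable (IsoAbove b t v) := by
  unfold IsoAbove; infer_instance

/-- `graftCount a b t = n(a,b,t)`: the number of edges `e` of `t` (identified with
their lower endpoints, the non-root vertices) such that `P_e(t) ≅ a` and
`R_e(t) ≅ b` as `S`-colored rooted trees. -/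
def graftCount {S : Type} [DecidableEq S] {p q m : ℕ}
    (a : PreTree S p) (b : PreTree S q) (t : PreTree S m) : ℕ :=
  (Finset.univ.filter fun v : Fin (m+1) =>
    v ≠ 0 ∧ IsoBelow a t v ∧ IsoAbove b t v).card

/-- Isomorphism of `S`-colored rooted trees on the same vertex set. -/
def treeRel {S : Type} {n : ℕ} (t t' : PreTree S n) : Prop :=
  ∃ e : Fin (n+1) ≃ Fin (n+1),
    e 0 = 0 ∧ (∀ i, i ≠ 0 → t'.1.1 (e i) = e (t.1.1 i)) ∧
    (∀ i, t'.1.2 (e i) = t.1.2 i)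

/-- Isomorphism classes of `S`-colored rooted trees with `n+1` vertices. -/
def TClass (S : Type) [Fintype S] [DecidableEq S] (n : ℕ) : Type :=
  Quot (@treeRel S n)

noncomputable instance (S : Type) [Fintype S] [DecidableEq S] (n : ℕ) :
    Fintype (TClass S n) :=
  letI : DecidableEq (TClass S n) := Classical.decEq _
  Fintype.ofSurjective (Quot.mk _) (fun q => Quot.exists_rep q)

open scoped BigOperators

/-- `RootIso2 c s v w` : cutting the two edges of `s` above the (incomparable)
vertices `v` and `w`, the component containing the root of `s` is isomorphic to `c`
as an `S`-colored rooted tree. -/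
def RootIso2 {S : Type} {r m : ℕ} (c : PreTree S r) (s : PreTree S m)
    (v w : Fin (m+1)) : Prop :=
  ∃ g : Fin (r+1) → Fin (m+1),
    Function.Injective g ∧ g 0 = 0 ∧
    (∀ j, (¬ desc s v j ∧ ¬ desc s w j) ↔ ∃ i, g i = j) ∧
    (∀ i, i ≠ 0 → s.1.1 (g i) = g (c.1.1 i)) ∧
    (∀ i, s.1.2 (g i) = c.1.2 i)

instance {S : Type} [DecidableEq S] {r m : ℕ} (c : PreTree S r) (s : PreTree S m)
    (v w : Fin (m+1)) : Decidable (RootIso2 c s v w) := by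
  unfold RootIso2; infer_instance

/-- The number of admissible two-edge cuts of `s` — ordered pairs `(v,w)` of
incomparable non-root vertices (so no root-to-leaf path contains both cut edges) —
such that the subtree below `v` is `≅ a`, the subtree below `w` is `≅ b`, and the
component of the root is `≅ c`. -/
def cutCount {S : Type} [DecidableEq S] {p q r m : ℕ}
    (a : PreTree S p) (b : PreTree S q) (c : PreTree S r) (s : PreTree S m) : ℕ :=
  (Finset.univ.filter fun vw : Fin (m+1) × Fin (m+1) =>
    vw.1 ≠ 0 ∧ vw.2 ≠ 0 ∧ ¬ desc s vw.1 vw.2 ∧ ¬ desc s vw.2 vw.1 ∧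
    IsoBelow a s vw.1 ∧ IsoBelow b s vw.2 ∧ RootIso2 c s vw.1 vw.2).card
namespace Stmt15Aux

open Finset

variable {S : Type} {n : ℕ}

lemma par_zero (t : PreTree S n) : t.1.1 0 = 0 := t.2.1

lemma par_lt (t : PreTree S n) {i : Fin (n+1)} (hi : i ≠ 0) : t.1.1 i < i := t.2.2 i hi

lemma par_le (t : PreTree S n) (i : Fin (n+1)) : t.1.1 i ≤ i := by
  by_cases hi : i = 0
  · subst hi; rw [par_zero]
  · exact le_of_lt (par_lt t hi)

lemma iterate_par_le (t : PreTree S n) (k : ℕ) (i : Fin (n+1)) : (t.1.1)^[k] i ≤ i := by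
  induction k generalizing i with
  | zero => simp
  | succ k ih =>
    rw [Function.iterate_succ_apply]
    exact le_trans (ih _) (par_le t i)

lemma iterate_par_zero (t : PreTree S n) : ∀ (k : ℕ) (j : Fin (n+1)), (j : ℕ) ≤ k → (t.1.1)^[k] j = 0 := by
  intro k
  induction k with
  | zero => intro j hj; have : j = 0 := Fin.ext (Nat.le_zero.mp hj); simpa [this]
  | succ k ih =>
    intro j hj
    by_cases h0 : j = 0
    · subst h0
      rw [Function.iterate_succ_apply, par_zero]
      exact ih 0 (Nat.zero_le _)
    · rw [Function.iterate_succ_apply]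
      refine ih _ ?_
      have h2 : ((t.1.1 j : Fin (n+1)) : ℕ) < (j : ℕ) := par_lt t h0
      omega

lemma desc_iff (t : PreTree S n) (v j : Fin (n+1)) :
    desc t v j ↔ ∃ k, (t.1.1)^[k] j = v := by
  constructor
  · rintro ⟨k, -, hk⟩; exact ⟨k, hk⟩
  · rintro ⟨k, hk⟩
    by_cases hv : v = 0
    · subst hv
      exact ⟨n+1, by simp [Finset.mem_range], iterate_par_zero t (n+1) j (by omega)⟩
    · -- find a small witness
      have key : ∀ (k : ℕ) (j : Fin (n+1)), (t.1.1)^[k] j = v → ∃ k' ≤ (j : ℕ), (t.1.1)^[k'] j = v := by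
        intro k
        induction k with
        | zero => intro j hj; exact ⟨0, Nat.zero_le _, hj⟩
        | succ k ih =>
          intro j hj
          by_cases hjv : j = v
          · exact ⟨0, Nat.zero_le _, by simpa [hjv]⟩
          · by_cases h0 : j = 0
            · exfalso
              subst h0
              rw [Function.iterate_succ_apply, par_zero] at hj
              rw [iterate_par_zero t k 0 (Nat.zero_le _)] at hj
              exact hv hj.symm
            · rw [Function.iterate_succ_apply] at hj
              obtain ⟨k', hk', hkv⟩ := ih _ hj
              refine ⟨k'+1, ?_, by rwa [Function.iterate_succ_apply]⟩
              have := par_lt t h0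
              omega
      obtain ⟨k', hk', hkv⟩ := key k j hk
      exact ⟨k', by simp only [Finset.mem_range]; omega, hkv⟩

lemma desc_refl (t : PreTree S n) (v : Fin (n+1)) : desc t v v :=
  (desc_iff t v v).mpr ⟨0, rfl⟩

lemma desc_zero_iff (t : PreTree S n) (v : Fin (n+1)) : desc t v 0 ↔ v = 0 := by
  rw [desc_iff]
  constructor
  · rintro ⟨k, hk⟩
    rw [Function.iterate_fixed (par_zero t) k] at hk
    exact hk.symm
  · rintro rfl; exact ⟨0, rfl⟩

lemma desc_zero_all (t : PreTree S n) (j : Fin (n+1)) : desc t 0 j :=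
  (desc_iff t 0 j).mpr ⟨n+1, iterate_par_zero t (n+1) j (by omega)⟩

lemma desc_le (t : PreTree S n) {v j : Fin (n+1)} (h : desc t v j) : v ≤ j := by
  rw [desc_iff] at h
  obtain ⟨k, hk⟩ := h
  rw [← hk]
  exact iterate_par_le t k j

lemma desc_antisymm (t : PreTree S n) {v j : Fin (n+1)} (h1 : desc t v j) (h2 : desc t j v) : v = j :=
  le_antisymm (desc_le t h1) (desc_le t h2)

lemma desc_trans (t : PreTree S n) {v j i : Fin (n+1)} (h1 : desc t v j) (h2 : desc t j i) :
    desc t v i := by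
  rw [desc_iff] at *
  obtain ⟨k1, hk1⟩ := h1
  obtain ⟨k2, hk2⟩ := h2
  exact ⟨k1 + k2, by rw [Function.iterate_add_apply, hk2, hk1]⟩

lemma desc_comparable (t : PreTree S n) {v w j : Fin (n+1)} (h1 : desc t v j) (h2 : desc t w j) :
    desc t v w ∨ desc t w v := by
  rw [desc_iff] at h1 h2
  obtain ⟨k1, hk1⟩ := h1
  obtain ⟨k2, hk2⟩ := h2
  rcases le_total k1 k2 with h | h
  · right
    refine (desc_iff t w v).mpr ⟨k2 - k1, ?_⟩
    rw [← hk1, ← Function.iterate_add_apply]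
    rw [Nat.sub_add_cancel h, hk2]
  · left
    refine (desc_iff t v w).mpr ⟨k1 - k2, ?_⟩
    rw [← hk2, ← Function.iterate_add_apply]
    rw [Nat.sub_add_cancel h, hk1]

lemma desc_par_lift (t : PreTree S n) {v j : Fin (n+1)} (h : desc t v (t.1.1 j)) : desc t v j := by
  rw [desc_iff] at *
  obtain ⟨k, hk⟩ := h
  exact ⟨k+1, by rwa [Function.iterate_succ_apply]⟩

lemma not_desc_par (t : PreTree S n) {v j : Fin (n+1)} (h : ¬ desc t v j) : ¬ desc t v (t.1.1 j) :=
  fun hh => h (desc_par_lift t hh)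

lemma desc_step (t : PreTree S n) {v j : Fin (n+1)} (h : desc t v j) (hj : j ≠ v) :
    desc t v (t.1.1 j) := by
  rw [desc_iff] at *
  obtain ⟨k, hk⟩ := h
  cases k with
  | zero => exact absurd hk hj
  | succ k => exact ⟨k, by rwa [Function.iterate_succ_apply] at hk⟩

end Stmt15Aux
namespace Stmt15Aux

open Finset

variable {S : Type} {n m k : ℕ}

/-- Generic embedded-subtree isomorphism statement. -/
def GIso (b : PreTree S k) (s : PreTree S m) (ρ : Fin (m+1)) (P : Fin (m+1) → Prop) : Prop :=
  ∃ G : Fin (k+1) → Fin (m+1),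
    Function.Injective G ∧ G 0 = ρ ∧
    (∀ j, P j ↔ ∃ i, G i = j) ∧
    (∀ i, i ≠ 0 → s.1.1 (G i) = G (b.1.1 i)) ∧
    (∀ i, s.1.2 (G i) = b.1.2 i)

lemma isoBelow_iff_gIso (a : PreTree S k) (t : PreTree S m) (v : Fin (m+1)) :
    IsoBelow a t v ↔ GIso a t v (desc t v) := Iff.rfl

lemma isoAbove_iff_gIso (b : PreTree S k) (t : PreTree S m) (v : Fin (m+1)) :
    IsoAbove b t v ↔ GIso b t 0 (fun j => ¬ desc t v j) := Iff.rfl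

lemma rootIso2_iff_gIso (c : PreTree S k) (t : PreTree S m) (v w : Fin (m+1)) :
    RootIso2 c t v w ↔ GIso c t 0 (fun j => ¬ desc t v j ∧ ¬ desc t w j) := Iff.rfl

lemma GIso_congr {b : PreTree S k} {s : PreTree S m} {ρ : Fin (m+1)}
    {P P' : Fin (m+1) → Prop} (h : ∀ j, P j ↔ P' j) :
    GIso b s ρ P ↔ GIso b s ρ P' := by
  unfold GIso
  constructor <;> rintro ⟨G, h1, h2, h3, h4, h5⟩ <;>
    exact ⟨G, h1, h2, fun j => by rw [← h3 j]; first | exact (h j).symm | exact h j, h4, h5⟩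

lemma GIso_card {b : PreTree S k} {s : PreTree S m} {ρ : Fin (m+1)}
    {P : Fin (m+1) → Prop} [DecidablePred P] (h : GIso b s ρ P) :
    (univ.filter P).card = k + 1 := by
  obtain ⟨G, h1, -, h3, -, -⟩ := h
  have : univ.filter P = univ.image G := by
    ext j
    simp only [mem_filter, mem_univ, true_and, mem_image]
    rw [h3 j]
  rw [this, Finset.card_image_of_injective _ h1, card_univ, Fintype.card_fin]

/-- Replace the smaller tree by an isomorphic one. -/
lemma GIso_rel_left {b b' : PreTree S k} {s : PreTree S m} {ρ : Fin (m+1)}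
    {P : Fin (m+1) → Prop} (hbb : treeRel b b') (h : GIso b s ρ P) : GIso b' s ρ P := by
  obtain ⟨ee, he0, hep, hec⟩ := hbb
  obtain ⟨G, h1, h2, h3, h4, h5⟩ := h
  refine ⟨G ∘ ee.symm, h1.comp ee.symm.injective, ?_, ?_, ?_, ?_⟩
  · simp only [Function.comp_apply]
    rw [show ee.symm 0 = 0 from ee.symm_apply_eq.mpr he0.symm, h2]
  · intro j
    rw [h3 j]
    constructor
    · rintro ⟨i, hi⟩; exact ⟨ee i, by simp [hi]⟩
    · rintro ⟨i, hi⟩; exact ⟨ee.symm i, hi⟩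
  · intro i hi
    have hsi : ee.symm i ≠ 0 := by
      intro hh
      apply hi
      rw [← he0, ← hh, Equiv.apply_symm_apply]
    simp only [Function.comp_apply]
    rw [h4 _ hsi]
    congr 1
    have := hep (ee.symm i) hsi
    rw [Equiv.apply_symm_apply] at this
    exact (ee.symm_apply_eq.mpr this).symm
  · intro i
    simp only [Function.comp_apply]
    rw [h5 (ee.symm i)]
    have := hec (ee.symm i)
    rw [Equiv.apply_symm_apply] at this
    exact this.symm

lemma treeRel_refl (t : PreTree S n) : treeRel t t :=
  ⟨Equiv.refl _, rfl, fun _ _ => rfl, fun _ => rfl⟩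

lemma treeRel_symm {t t' : PreTree S n} (h : treeRel t t') : treeRel t' t := by
  obtain ⟨e, he0, hep, hec⟩ := h
  refine ⟨e.symm, e.symm_apply_eq.mpr he0.symm, ?_, ?_⟩
  · intro i hi
    have hsi : e.symm i ≠ 0 := by
      intro hh; apply hi; rw [← he0, ← hh, Equiv.apply_symm_apply]
    have := hep (e.symm i) hsi
    rw [Equiv.apply_symm_apply] at this
    rw [this, Equiv.symm_apply_apply]
  · intro i
    have := hec (e.symm i)
    rw [Equiv.apply_symm_apply] at this
    rw [← this]

lemma treeRel_trans {t t' t'' : PreTree S n} (h : treeRel t t') (h' : treeRel t' t'') :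
    treeRel t t'' := by
  obtain ⟨e, he0, hep, hec⟩ := h
  obtain ⟨e', he0', hep', hec'⟩ := h'
  refine ⟨e.trans e', by simp [Equiv.trans_apply, he0, he0'], ?_, ?_⟩
  · intro i hi
    simp only [Equiv.trans_apply]
    have hei : e i ≠ 0 := by
      intro hh; apply hi
      have := e.injective (hh.trans he0.symm)
      exact this
    rw [hep' (e i) hei, hep i hi]
  · intro i
    simp only [Equiv.trans_apply]
    rw [hec' (e i), hec i]

lemma treeRel_equivalence : Equivalence (@treeRel S n) :=
  ⟨treeRel_refl, treeRel_symm, treeRel_trans⟩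

lemma tclass_mk_eq {t t' : PreTree S n} :
    Quot.mk treeRel t = Quot.mk treeRel t' ↔ treeRel t t' := by
  rw [Quot.eq]
  exact treeRel_equivalence.eqvGen_iff

section FintypeS
variable [Fintype S] [DecidableEq S]

lemma out_rel (t : PreTree S n) :
    treeRel ((Quot.mk treeRel t : TClass S n).out) t := by
  have := Quot.out_eq (Quot.mk treeRel t : TClass S n)
  exact tclass_mk_eq.mp this

lemma tclass_eq_iff (T : TClass S n) (t : PreTree S n) :
    T = Quot.mk treeRel t ↔ treeRel T.out t := by
  constructor
  · rintro rfl; exact out_rel t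
  · intro h
    rw [← Quot.out_eq T]
    exact Quot.sound h

end FintypeS

/-- Transport a `GIso` along an isomorphism of the big tree. -/
lemma GIso_rel_big {b : PreTree S k} {t t' : PreTree S m} (e : Fin (m+1) ≃ Fin (m+1))
    (he0 : e 0 = 0) (hep : ∀ i, i ≠ 0 → t'.1.1 (e i) = e (t.1.1 i)) (hec : ∀ i, t'.1.2 (e i) = t.1.2 i)
    {ρ : Fin (m+1)} {P : Fin (m+1) → Prop} (h : GIso b t ρ P) :
    GIso b t' (e ρ) (fun j => P (e.symm j)) := by
  obtain ⟨G, h1, h2, h3, h4, h5⟩ := h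
  have hep' : ∀ i, t'.1.1 (e i) = e (t.1.1 i) := by
    intro i
    by_cases hi : i = 0
    · subst hi; rw [he0, t.2.1, t'.2.1, he0]
    · exact hep i hi
  refine ⟨fun i => e (G i), e.injective.comp h1, show e (G 0) = e ρ by rw [h2], ?_, ?_, ?_⟩
  · intro j
    show P (e.symm j) ↔ ∃ i, e (G i) = j
    rw [h3 (e.symm j)]
    constructor
    · rintro ⟨i, hi⟩; exact ⟨i, by rw [hi, Equiv.apply_symm_apply]⟩
    · rintro ⟨i, hi⟩; exact ⟨i, by rw [← hi, Equiv.symm_apply_apply]⟩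
  · intro i hi
    show t'.1.1 (e (G i)) = e (G (b.1.1 i))
    rw [hep' (G i), h4 i hi]
  · intro i
    show t'.1.2 (e (G i)) = b.1.2 i
    rw [hec (G i), h5 i]

/-- `desc` transported along an isomorphism of trees. -/
lemma desc_rel_big {t t' : PreTree S m} (e : Fin (m+1) ≃ Fin (m+1))
    (he0 : e 0 = 0) (hep : ∀ i, i ≠ 0 → t'.1.1 (e i) = e (t.1.1 i))
    (v j : Fin (m+1)) : desc t v j ↔ desc t' (e v) (e j) := by
  have hep' : ∀ i, t'.1.1 (e i) = e (t.1.1 i) := by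
    intro i
    by_cases hi : i = 0
    · subst hi; rw [he0, t.2.1, t'.2.1, he0]
    · exact hep i hi
  have hit : ∀ (k : ℕ) (x : Fin (m+1)), (t'.1.1)^[k] (e x) = e ((t.1.1)^[k] x) := by
    intro k
    induction k with
    | zero => intro x; rfl
    | succ k ih => intro x; rw [Function.iterate_succ_apply, Function.iterate_succ_apply, hep', ih]
  rw [desc_iff, desc_iff]
  constructor
  · rintro ⟨k, hk⟩; exact ⟨k, by rw [hit, hk]⟩
  · rintro ⟨k, hk⟩
    exact ⟨k, e.injective (by rw [← hit, hk])⟩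

/-- Conditions of `graftCount` transfer along a tree isomorphism. -/
lemma graft_cond_transfer [DecidableEq S] {p q : ℕ} (b : PreTree S p) (c : PreTree S q)
    {t t' : PreTree S m} (e : Fin (m+1) ≃ Fin (m+1))
    (he0 : e 0 = 0) (hep : ∀ i, i ≠ 0 → t'.1.1 (e i) = e (t.1.1 i))
    (hec : ∀ i, t'.1.2 (e i) = t.1.2 i) (v : Fin (m+1))
    (h : v ≠ 0 ∧ IsoBelow b t v ∧ IsoAbove c t v) :
    e v ≠ 0 ∧ IsoBelow b t' (e v) ∧ IsoAbove c t' (e v) := by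
  obtain ⟨hv0, hbel, habo⟩ := h
  refine ⟨by intro hh; exact hv0 (e.injective (hh.trans he0.symm)), ?_, ?_⟩
  · rw [isoBelow_iff_gIso] at hbel ⊢
    have := GIso_rel_big e he0 hep hec hbel
    refine (GIso_congr ?_).mp this
    intro j
    rw [desc_rel_big e he0 hep v (e.symm j), Equiv.apply_symm_apply]
  · rw [isoAbove_iff_gIso] at habo ⊢
    have := GIso_rel_big e he0 hep hec habo
    rw [he0] at this
    refine (GIso_congr ?_).mp this
    intro j
    rw [desc_rel_big e he0 hep v (e.symm j), Equiv.apply_symm_apply]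

/-- `graftCount` only depends on the isomorphism class of the third argument. -/
lemma graftCount_rel_right [DecidableEq S] {p q : ℕ} (b : PreTree S p) (c : PreTree S q)
    {t t' : PreTree S m} (h : treeRel t t') : graftCount b c t = graftCount b c t' := by
  obtain ⟨e, he0, hep, hec⟩ := h
  have he0s : e.symm 0 = 0 := e.symm_apply_eq.mpr he0.symm
  have heps : ∀ i, i ≠ 0 → t.1.1 (e.symm i) = e.symm (t'.1.1 i) := by
    intro i hi
    have hsi : e.symm i ≠ 0 := by
      intro hh; apply hi; rw [← he0, ← hh, Equiv.apply_symm_apply]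
    have := hep (e.symm i) hsi
    rw [Equiv.apply_symm_apply] at this
    exact (e.symm_apply_eq.mpr this).symm
  have hecs : ∀ i, t.1.2 (e.symm i) = t'.1.2 i := by
    intro i
    have := hec (e.symm i)
    rw [Equiv.apply_symm_apply] at this
    exact this.symm
  unfold graftCount
  apply Finset.card_nbij (fun v => e v)
  · intro v hv
    simp only [mem_coe, mem_filter, mem_univ, true_and] at hv ⊢
    exact graft_cond_transfer b c e he0 hep hec v hv
  · exact fun x _ y _ hxy => e.injective hxy
  · intro w hw
    simp only [coe_filter, Set.mem_setOf_eq, mem_univ, true_and] at hw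
    refine ⟨e.symm w, ?_, by simp⟩
    simp only [coe_filter, Set.mem_setOf_eq, mem_univ, true_and]
    have := graft_cond_transfer b c e.symm he0s heps hecs w hw
    simpa using this

end Stmt15Aux
namespace Stmt15Aux

open Finset

/-- Data of a parent-closed subset `D` of the vertices of `s` with minimum `ρ`,
having `N+1` elements. -/
structure RData (S : Type) (m N : ℕ) (s : PreTree S m) where
  D : Finset (Fin (m+1))
  ρ : Fin (m+1)
  hρ : ρ ∈ D
  hmin : ∀ j ∈ D, ρ ≤ j
  hcl : ∀ j ∈ D, j ≠ ρ → s.1.1 j ∈ D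
  hcard : D.card = N+1

namespace RData

variable {S : Type} {m N : ℕ} {s : PreTree S m} (R : RData S m N s)

/-- The order isomorphism enumerating `D`. -/
def emb : Fin (N+1) ≃o {x // x ∈ R.D} := R.D.orderIsoOfFin R.hcard

lemma emb_zero : (R.emb 0 : Fin (m+1)) = R.ρ := by
  refine le_antisymm ?_ (R.hmin _ (R.emb 0).2)
  have h1 : R.emb 0 ≤ R.emb (R.emb.symm ⟨R.ρ, R.hρ⟩) := R.emb.monotone (Fin.zero_le _)
  rw [OrderIso.apply_symm_apply] at h1
  exact h1

lemma emb_ne_rho {i : Fin (N+1)} (hi : i ≠ 0) : (R.emb i : Fin (m+1)) ≠ R.ρ := by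
  intro hh
  apply hi
  apply R.emb.injective
  apply Subtype.ext
  rw [hh, R.emb_zero]

lemma emb_ne_zero {i : Fin (N+1)} (hρ0 : R.ρ ≠ 0) : (R.emb i : Fin (m+1)) ≠ 0 := by
  intro hh
  have := R.hmin _ (R.emb i).2
  rw [hh] at this
  exact hρ0 (Fin.le_zero_iff.mp this)

/-- The parent function of the restricted tree. -/
def rpar (i : Fin (N+1)) : Fin (N+1) :=
  if h : i = 0 then 0 else
    R.emb.symm ⟨s.1.1 (R.emb i), R.hcl _ (R.emb i).2 (R.emb_ne_rho h)⟩

lemma rpar_zero : R.rpar 0 = 0 := dif_pos rfl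

lemma rpar_lt {i : Fin (N+1)} (hi : i ≠ 0) : R.rpar i < i := by
  unfold rpar
  rw [dif_neg hi]
  have h1 : (⟨s.1.1 (R.emb i), R.hcl _ (R.emb i).2 (R.emb_ne_rho hi)⟩ : {x // x ∈ R.D}) < R.emb i := by
    apply Subtype.mk_lt_mk.mpr
    apply par_lt s
    intro hh
    have h2 := R.hmin _ (R.emb i).2
    rw [hh] at h2
    exact R.emb_ne_rho hi (hh.trans (Fin.le_zero_iff.mp h2).symm)
  calc R.emb.symm ⟨s.1.1 (R.emb i), _⟩
      < R.emb.symm (R.emb i) := R.emb.symm.strictMono h1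
    _ = i := R.emb.symm_apply_apply i

/-- The restriction of `s` to the parent-closed set `D`, as a `PreTree`. -/
def restr : PreTree S N :=
  ⟨⟨R.rpar, fun i => s.1.2 (R.emb i)⟩, R.rpar_zero, fun _ hi => R.rpar_lt hi⟩

lemma restr_par_zero : R.restr.1.1 0 = 0 := R.rpar_zero

lemma restr_par_ne {i : Fin (N+1)} (hi : i ≠ 0) :
    ((R.emb (R.restr.1.1 i)) : Fin (m+1)) = s.1.1 (R.emb i) := by
  show ((R.emb (dite _ _ _)) : Fin (m+1)) = _
  rw [dif_neg hi, OrderIso.apply_symm_apply]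

lemma restr_col (i : Fin (N+1)) : R.restr.1.2 i = s.1.2 (R.emb i) := rfl

lemma desc_root {x : Fin (m+1)} (hx : x ∈ R.D) : desc s R.ρ x := by
  have key : ∀ nn : ℕ, ∀ x : Fin (m+1), x ∈ R.D → (x : ℕ) = nn → desc s R.ρ x := by
    intro nn
    induction nn using Nat.strong_induction_on with
    | _ nn ih =>
      intro x hx hxn
      by_cases hxρ : x = R.ρ
      · rw [hxρ]; exact desc_refl s R.ρ
      · have hx0 : x ≠ 0 := by
          intro hh
          have := R.hmin x hx
          rw [hh] at this
          exact hxρ (hh.trans (Fin.le_zero_iff.mp this).symm)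
        have hlt : ((s.1.1 x : Fin (m+1)) : ℕ) < nn := by
          rw [← hxn]; exact par_lt s hx0
        exact desc_par_lift s (ih _ hlt _ (R.hcl x hx hxρ) rfl)
  exact key _ x hx rfl

lemma restr_iter_fwd : ∀ (k : ℕ) (j' v' : Fin (N+1)), v' ≠ 0 →
    R.restr.1.1^[k] j' = v' →
    (s.1.1)^[k] (R.emb j' : Fin (m+1)) = (R.emb v' : Fin (m+1)) := by
  intro k
  induction k with
  | zero =>
    intro j' v' _ h
    rw [Function.iterate_zero_apply] at h
    rw [h, Function.iterate_zero_apply]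
  | succ k ih =>
    intro j' v' hv h
    rw [Function.iterate_succ_apply] at h
    by_cases hj : j' = 0
    · exfalso
      subst hj
      rw [R.restr_par_zero, Function.iterate_fixed R.restr_par_zero] at h
      exact hv h.symm
    · rw [Function.iterate_succ_apply, ← R.restr_par_ne hj]
      exact ih _ _ hv h

lemma restr_iter_bwd : ∀ (k : ℕ) (j' v' : Fin (N+1)), v' ≠ 0 →
    (s.1.1)^[k] (R.emb j' : Fin (m+1)) = (R.emb v' : Fin (m+1)) →
    R.restr.1.1^[k] j' = v' := by
  intro k
  induction k with
  | zero =>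
    intro j' v' _ h
    rw [Function.iterate_zero_apply] at h
    exact R.emb.injective (Subtype.ext h)
  | succ k ih =>
    intro j' v' hv h
    rw [Function.iterate_succ_apply] at h
    have hjρ : (R.emb j' : Fin (m+1)) ≠ R.ρ := by
      intro hh
      rw [hh] at h
      by_cases hρ0 : R.ρ = 0
      · have h4 : (R.emb v' : Fin (m+1)) = 0 := by
          rw [← h, hρ0, par_zero s, Function.iterate_fixed (par_zero s)]
        apply hv
        apply R.emb.injective
        apply Subtype.ext
        rw [h4, R.emb_zero, hρ0]
      · have h1 : (s.1.1)^[k] (s.1.1 R.ρ) ≤ s.1.1 R.ρ := iterate_par_le s k _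
        have h2 : s.1.1 R.ρ < R.ρ := par_lt s hρ0
        have h3 : R.ρ ≤ (R.emb v' : Fin (m+1)) := R.hmin _ (R.emb v').2
        rw [h] at h1
        exact absurd (lt_of_le_of_lt h1 h2) (not_lt.mpr h3)
    have hj0 : j' ≠ 0 := by
      intro hh
      apply hjρ
      rw [hh, R.emb_zero]
    have hmem : s.1.1 (R.emb j' : Fin (m+1)) ∈ R.D := R.hcl _ (R.emb j').2 hjρ
    set j'' := R.emb.symm ⟨s.1.1 (R.emb j' : Fin (m+1)), hmem⟩ with hj''
    have hcoe : (R.emb j'' : Fin (m+1)) = s.1.1 (R.emb j' : Fin (m+1)) := by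
      rw [hj'', OrderIso.apply_symm_apply]
    have hpar : R.restr.1.1 j' = j'' := by
      apply R.emb.injective
      apply Subtype.ext
      rw [R.restr_par_ne hj0, hcoe]
    rw [Function.iterate_succ_apply, hpar]
    apply ih _ _ hv
    rw [hcoe, h]

lemma desc_restr (v' j' : Fin (N+1)) :
    desc R.restr v' j' ↔ desc s (R.emb v' : Fin (m+1)) (R.emb j' : Fin (m+1)) := by
  by_cases hv : v' = 0
  · subst hv
    rw [R.emb_zero]
    constructor
    · intro _; exact R.desc_root (R.emb j').2
    · intro _; exact desc_zero_all _ _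
  · rw [desc_iff, desc_iff]
    constructor
    · rintro ⟨k, hk⟩
      exact ⟨k, R.restr_iter_fwd k j' v' hv hk⟩
    · rintro ⟨k, hk⟩
      exact ⟨k, R.restr_iter_bwd k j' v' hv hk⟩

/-- Transfer of subtree-isomorphism statements between `restr` and `s`. -/
lemma gIso_restr {k : ℕ} (b : PreTree S k) (w' : Fin (N+1)) (P : Fin (m+1) → Prop)
    (Q : Fin (N+1) → Prop) (hQ : ∀ j', Q j' ↔ P (R.emb j' : Fin (m+1)))
    (hPD : ∀ j, P j → j ∈ R.D) (hz : P R.ρ → w' = 0) :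
    GIso b R.restr w' Q ↔ GIso b s (R.emb w' : Fin (m+1)) P := by
  constructor
  · rintro ⟨F, h1, h2, h3, h4, h5⟩
    have hF0 : ∀ i, i ≠ 0 → F i ≠ 0 := by
      intro i hi hFi
      have hPρ : P R.ρ := by
        have : Q (F i) := (h3 (F i)).mpr ⟨i, rfl⟩
        rw [hQ, hFi, R.emb_zero] at this
        exact this
      exact hi (h1 ((hFi.trans (hz hPρ).symm).trans h2.symm))
    refine ⟨fun i => (R.emb (F i) : Fin (m+1)),
      fun x y hxy => h1 (R.emb.injective (Subtype.ext hxy)),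
      show (R.emb (F 0) : Fin (m+1)) = _ by rw [h2], ?_, ?_, ?_⟩
    · intro j
      constructor
      · intro hP
        have : Q (R.emb.symm ⟨j, hPD j hP⟩) := by
          rw [hQ, OrderIso.apply_symm_apply]
          exact hP
        obtain ⟨i, hi⟩ := (h3 _).mp this
        refine ⟨i, ?_⟩
        show (R.emb (F i) : Fin (m+1)) = j
        rw [hi, OrderIso.apply_symm_apply]
      · rintro ⟨i, hi⟩
        have : Q (F i) := (h3 (F i)).mpr ⟨i, rfl⟩
        rw [hQ] at this
        rwa [← hi]
    · intro i hi
      show s.1.1 (R.emb (F i) : Fin (m+1)) = (R.emb (F (b.1.1 i)) : Fin (m+1))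
      rw [← R.restr_par_ne (hF0 i hi), h4 i hi]
    · intro i
      show s.1.2 (R.emb (F i) : Fin (m+1)) = b.1.2 i
      rw [← h5 i, R.restr_col]
  · rintro ⟨G, h1, h2, h3, h4, h5⟩
    have hGD : ∀ i, G i ∈ R.D := fun i => hPD _ ((h3 (G i)).mpr ⟨i, rfl⟩)
    set F : Fin (k+1) → Fin (N+1) := fun i => R.emb.symm ⟨G i, hGD i⟩ with hF
    have hFcoe : ∀ i, (R.emb (F i) : Fin (m+1)) = G i := by
      intro i; rw [hF, OrderIso.apply_symm_apply]
    have hF0 : ∀ i, i ≠ 0 → F i ≠ 0 := by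
      intro i hi hFi
      have hGρ : G i = R.ρ := by rw [← hFcoe i, hFi, R.emb_zero]
      have hPρ : P R.ρ := hGρ ▸ ((h3 (G i)).mpr ⟨i, rfl⟩)
      have hG0 : G 0 = R.ρ := by rw [h2, hz hPρ, R.emb_zero]
      exact hi (h1 (hGρ.trans hG0.symm))
    refine ⟨F, ?_, ?_, ?_, ?_, ?_⟩
    · intro x y hxy
      apply h1
      have := congrArg (fun z => (R.emb z : Fin (m+1))) hxy
      simpa only [hFcoe] using this
    · apply R.emb.injective
      apply Subtype.ext
      rw [hFcoe 0, h2]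
    · intro j'
      rw [hQ, h3]
      constructor
      · rintro ⟨i, hi⟩
        refine ⟨i, ?_⟩
        apply R.emb.injective
        apply Subtype.ext
        rw [hFcoe i, hi]
      · rintro ⟨i, hi⟩
        exact ⟨i, by rw [← hi, hFcoe i]⟩
    · intro i hi
      apply R.emb.injective
      apply Subtype.ext
      rw [R.restr_par_ne (hF0 i hi), hFcoe i, hFcoe _, h4 i hi]
    · intro i
      rw [R.restr_col, hFcoe i, h5 i]

/-- Transfer of whole-tree isomorphism: `treeRel T' restr ↔ GIso T' s ρ (· ∈ D)`. -/
lemma treeRel_restr (T' : PreTree S N) :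
    treeRel T' R.restr ↔ GIso T' s R.ρ (fun j => j ∈ R.D) := by
  constructor
  · rintro ⟨ee, he0, hep, hec⟩
    refine ⟨fun i => (R.emb (ee i) : Fin (m+1)),
      fun x y hxy => ee.injective (R.emb.injective (Subtype.ext hxy)),
      show (R.emb (ee 0) : Fin (m+1)) = _ by rw [he0, R.emb_zero], ?_, ?_, ?_⟩
    · intro j
      constructor
      · intro hj
        refine ⟨ee.symm (R.emb.symm ⟨j, hj⟩), ?_⟩
        show (R.emb (ee (ee.symm (R.emb.symm ⟨j, hj⟩))) : Fin (m+1)) = j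
        rw [Equiv.apply_symm_apply, OrderIso.apply_symm_apply]
      · rintro ⟨i, hi⟩
        rw [← hi]
        exact (R.emb (ee i)).2
    · intro i hi
      have hei : ee i ≠ 0 := by
        intro hh; exact hi (ee.injective (hh.trans he0.symm))
      show s.1.1 (R.emb (ee i) : Fin (m+1)) = (R.emb (ee (T'.1.1 i)) : Fin (m+1))
      rw [← R.restr_par_ne hei, hep i hi]
    · intro i
      show s.1.2 (R.emb (ee i) : Fin (m+1)) = T'.1.2 i
      rw [← hec i, R.restr_col]
  · rintro ⟨G, h1, h2, h3, h4, h5⟩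
    have hGD : ∀ i, G i ∈ R.D := fun i => (h3 (G i)).mpr ⟨i, rfl⟩
    set F : Fin (N+1) → Fin (N+1) := fun i => R.emb.symm ⟨G i, hGD i⟩ with hF
    have hFcoe : ∀ i, (R.emb (F i) : Fin (m+1)) = G i := by
      intro i; rw [hF, OrderIso.apply_symm_apply]
    have hFinj : Function.Injective F := by
      intro x y hxy
      apply h1
      have := congrArg (fun z => (R.emb z : Fin (m+1))) hxy
      simpa only [hFcoe] using this
    have hFsurj : Function.Surjective F := by
      intro j'
      obtain ⟨i, hi⟩ := (h3 (R.emb j' : Fin (m+1))).mp (R.emb j').2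
      refine ⟨i, ?_⟩
      apply R.emb.injective
      apply Subtype.ext
      rw [hFcoe i, hi]
    have hF0 : F 0 = 0 := by
      apply R.emb.injective
      apply Subtype.ext
      rw [hFcoe 0, h2, R.emb_zero]
    refine ⟨Equiv.ofBijective F ⟨hFinj, hFsurj⟩, hF0, ?_, ?_⟩
    · intro i hi
      show R.restr.1.1 (F i) = F (T'.1.1 i)
      have hFi0 : F i ≠ 0 := by
        intro hh
        exact hi (hFinj (hh.trans hF0.symm))
      apply R.emb.injective
      apply Subtype.ext
      rw [R.restr_par_ne hFi0, hFcoe i, hFcoe _, h4 i hi]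
    · intro i
      show R.restr.1.2 (F i) = T'.1.2 i
      rw [R.restr_col, hFcoe i, h5 i]

end RData
end Stmt15Aux
namespace Stmt15Aux

open Finset

variable {S : Type} [Fintype S] [DecidableEq S]

/-- The middle component of a two-edge cut: vertices below `w` but not below `v`. -/
def CompBelow {q m : ℕ} (b : PreTree S q) (s : PreTree S m) (v w : Fin (m+1)) : Prop :=
  GIso b s w (fun j => ¬ desc s v j ∧ desc s w j)

instance {q m : ℕ} (b : PreTree S q) (s : PreTree S m) (v w : Fin (m+1)) :
    Decidable (CompBelow b s v w) := by
  unfold CompBelow GIso; infer_instance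

lemma rootIso2_iff_isoAbove {r m : ℕ} (c : PreTree S r) (s : PreTree S m)
    {v w : Fin (m+1)} (hwv : desc s w v) : RootIso2 c s v w ↔ IsoAbove c s w := by
  rw [rootIso2_iff_gIso, isoAbove_iff_gIso]
  apply GIso_congr
  intro j
  constructor
  · exact fun h => h.2
  · exact fun h => ⟨fun hv => h (desc_trans s hwv hv), h⟩

lemma compBelow_iff_isoBelow {q m : ℕ} (b : PreTree S q) (s : PreTree S m)
    {v w : Fin (m+1)} (h1 : ¬ desc s v w) (h2 : ¬ desc s w v) :
    CompBelow b s v w ↔ IsoBelow b s w := by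
  rw [isoBelow_iff_gIso]
  apply GIso_congr
  intro j
  constructor
  · exact fun h => h.2
  · refine fun h => ⟨fun hv => ?_, h⟩
    rcases desc_comparable s hv h with hh | hh
    · exact h1 hh
    · exact h2 hh

lemma rootIso2_comm {r m : ℕ} (c : PreTree S r) (s : PreTree S m) (v w : Fin (m+1)) :
    RootIso2 c s v w ↔ RootIso2 c s w v := by
  rw [rootIso2_iff_gIso, rootIso2_iff_gIso]
  exact GIso_congr (fun j => and_comm)

/-- Generic collapsing of a sum over isomorphism classes. -/
lemma sum_collapse {α : Type} [DecidableEq α] {N : ℕ} (F : TClass S N → ℕ)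
    (V : Finset α) (pred : TClass S N → α → Prop)
    [∀ T x, Decidable (pred T x)] (G : α → ℕ)
    (h : ∀ x ∈ V, ∃ T0, (∀ T, pred T x ↔ T = T0) ∧ F T0 = G x) :
    ∑ T : TClass S N, F T * (V.filter (pred T)).card = ∑ x ∈ V, G x := by
  classical
  have step1 : ∀ T : TClass S N, F T * (V.filter (pred T)).card
      = ∑ x ∈ V, if pred T x then F T else 0 := by
    intro T
    rw [Finset.card_filter, Finset.mul_sum]
    apply Finset.sum_congr rfl
    intro x _
    by_cases hx : pred T x <;> simp [hx]
  calc ∑ T : TClass S N, F T * (V.filter (pred T)).card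
      = ∑ T : TClass S N, ∑ x ∈ V, if pred T x then F T else 0 := by
        exact Finset.sum_congr rfl (fun T _ => step1 T)
    _ = ∑ x ∈ V, ∑ T : TClass S N, if pred T x then F T else 0 := Finset.sum_comm
    _ = ∑ x ∈ V, G x := by
        apply Finset.sum_congr rfl
        intro x hx
        obtain ⟨T0, hiff, hval⟩ := h x hx
        calc ∑ T : TClass S N, (if pred T x then F T else 0)
            = ∑ T : TClass S N, (if T = T0 then F T else 0) :=
              Finset.sum_congr rfl (fun T _ => if_congr (hiff T) rfl rfl)
          _ = if T0 ∈ (univ : Finset (TClass S N)) then F T0 else 0 :=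
              Finset.sum_ite_eq' univ T0 F
          _ = G x := by rw [if_pos (mem_univ _), hval]

/-- Claim A : the first sum counts pairs `(v,w)` with `w` not below `v`. -/
lemma claimA {p q r m : ℕ} (a : PreTree S p) (b : PreTree S q) (c : PreTree S r)
    (s : PreTree S m) (hm : m = p + q + r + 2) :
    (∑ T : TClass S (q+r+1), graftCount b c T.out * graftCount a T.out s)
      = (univ.filter (fun vw : Fin (m+1) × Fin (m+1) =>
          (vw.1 ≠ 0 ∧ IsoBelow a s vw.1) ∧ vw.2 ≠ 0 ∧ ¬ desc s vw.1 vw.2 ∧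
            CompBelow b s vw.1 vw.2 ∧ RootIso2 c s vw.1 vw.2)).card := by
  classical
  set V : Finset (Fin (m+1)) := univ.filter (fun v => v ≠ 0 ∧ IsoBelow a s v) with hV
  set W : Fin (m+1) → Finset (Fin (m+1)) := fun v => univ.filter (fun w =>
    w ≠ 0 ∧ ¬ desc s v w ∧ CompBelow b s v w ∧ RootIso2 c s v w) with hW
  have hgc : ∀ T : TClass S (q+r+1), graftCount a T.out s
      = (V.filter (fun v => IsoAbove T.out s v)).card := by
    intro T
    unfold graftCount
    rw [hV, filter_filter]
    congr 1
    apply filter_congr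
    intro x _
    constructor
    · rintro ⟨h1, h2, h3⟩; exact ⟨⟨h1, h2⟩, h3⟩
    · rintro ⟨⟨h1, h2⟩, h3⟩; exact ⟨h1, h2, h3⟩
  have key : ∀ v ∈ V, ∃ T0 : TClass S (q+r+1),
      (∀ T : TClass S (q+r+1), IsoAbove T.out s v ↔ T = T0) ∧
      graftCount b c T0.out = (W v).card := by
    intro v hv
    rw [hV, mem_filter] at hv
    obtain ⟨-, hv0, hbel⟩ := hv
    have hρD : (0 : Fin (m+1)) ∈ univ.filter (fun j => ¬ desc s v j) := by
      rw [mem_filter]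
      exact ⟨mem_univ _, fun hh => hv0 ((desc_zero_iff s v).mp hh)⟩
    have hcA : (univ.filter (fun j => desc s v j)).card = p + 1 :=
      GIso_card ((isoBelow_iff_gIso a s v).mp hbel)
    have hcard : (univ.filter (fun j => ¬ desc s v j)).card = (q+r+1) + 1 := by
      have htot := Finset.card_filter_add_card_filter_not
        (s := (univ : Finset (Fin (m+1)))) (p := fun j => desc s v j)
      rw [hcA, card_univ, Fintype.card_fin] at htot
      omega
    set R : RData S m (q+r+1) s := ⟨univ.filter (fun j => ¬ desc s v j), 0, hρD,
      fun j _ => Fin.zero_le j,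
      fun j hj _ => by
        rw [mem_filter] at hj ⊢
        exact ⟨mem_univ _, not_desc_par s hj.2⟩,
      hcard⟩ with hR
    have hmemD : ∀ j, j ∈ R.D ↔ ¬ desc s v j := by
      intro j
      rw [hR]
      show j ∈ univ.filter (fun j => ¬ desc s v j) ↔ _
      rw [mem_filter]
      simp
    have hρ0 : R.ρ = 0 := rfl
    have hemb0 : (R.emb 0 : Fin (m+1)) = 0 := by rw [R.emb_zero, hρ0]
    refine ⟨Quot.mk treeRel R.restr, ?_, ?_⟩
    · intro T
      rw [tclass_eq_iff, R.treeRel_restr, isoAbove_iff_gIso, ← hρ0]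
      apply GIso_congr
      intro j
      rw [hmemD j]
    · rw [graftCount_rel_right b c (out_rel R.restr)]
      have hBel : ∀ w' : Fin (q+r+1+1), IsoBelow b R.restr w' ↔
          CompBelow b s v (R.emb w' : Fin (m+1)) := by
        intro w'
        rw [isoBelow_iff_gIso]
        refine R.gIso_restr b w'
          (fun j => ¬ desc s v j ∧ desc s (R.emb w' : Fin (m+1)) j)
          (fun j' => desc R.restr w' j') ?_ ?_ ?_
        · intro j'
          show desc R.restr w' j' ↔ (¬ desc s v (R.emb j' : Fin (m+1)) ∧
            desc s (R.emb w' : Fin (m+1)) (R.emb j' : Fin (m+1)))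
          rw [R.desc_restr]
          constructor
          · intro h
            exact ⟨(hmemD _).mp (R.emb j').2, h⟩
          · exact And.right
        · intro j hj
          exact (hmemD j).mpr hj.1
        · intro hP
          rw [hρ0] at hP
          have h1 : (R.emb w' : Fin (m+1)) = 0 := (desc_zero_iff s _).mp hP.2
          apply R.emb.injective
          apply Subtype.ext
          rw [h1, hemb0]
      have hAbo : ∀ w' : Fin (q+r+1+1), IsoAbove c R.restr w' ↔
          RootIso2 c s v (R.emb w' : Fin (m+1)) := by
        intro w'
        rw [isoAbove_iff_gIso, rootIso2_iff_gIso]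
        have := R.gIso_restr c 0
          (fun j => ¬ desc s v j ∧ ¬ desc s (R.emb w' : Fin (m+1)) j)
          (fun j' => ¬ desc R.restr w' j') ?_ ?_ ?_
        · rw [hemb0] at this
          exact this
        · intro j'
          show ¬ desc R.restr w' j' ↔ (¬ desc s v (R.emb j' : Fin (m+1)) ∧
            ¬ desc s (R.emb w' : Fin (m+1)) (R.emb j' : Fin (m+1)))
          rw [R.desc_restr]
          constructor
          · intro h
            exact ⟨(hmemD _).mp (R.emb j').2, h⟩
          · exact And.right
        · intro j hj
          exact (hmemD j).mpr hj.1
        · intro _; rfl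
      unfold graftCount
      apply card_nbij (fun w' => (R.emb w' : Fin (m+1)))
      · intro w' hw'
        rw [mem_coe, mem_filter] at hw'
        obtain ⟨-, hw0, hwb, hwa⟩ := hw'
        rw [hW]
        rw [mem_coe, mem_filter]
        refine ⟨mem_univ _, ?_, ?_, ?_, ?_⟩
        · intro hh
          exact R.emb_ne_rho hw0 (hh.trans hρ0.symm)
        · exact (hmemD _).mp (R.emb w').2
        · exact (hBel w').mp hwb
        · exact (hAbo w').mp hwa
      · intro x _ y _ hxy
        exact R.emb.injective (Subtype.ext hxy)
      · intro w hw
        rw [hW] at hw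
        simp only [coe_filter, Set.mem_setOf_eq, mem_univ, true_and] at hw
        obtain ⟨hw0, hwnd, hwb, hwa⟩ := hw
        have hwD : w ∈ R.D := (hmemD w).mpr hwnd
        refine ⟨R.emb.symm ⟨w, hwD⟩, ?_, ?_⟩
        · have hcoe : (R.emb (R.emb.symm ⟨w, hwD⟩) : Fin (m+1)) = w := by
            rw [OrderIso.apply_symm_apply]
          simp only [coe_filter, Set.mem_setOf_eq, mem_univ, true_and]
          refine ⟨?_, ?_, ?_⟩
          · intro hh
            apply hw0
            rw [← hcoe, hh, hemb0]
          · rw [(hBel _)]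
            rw [hcoe]
            exact hwb
          · rw [(hAbo _)]
            rw [hcoe]
            exact hwa
        · show (R.emb (R.emb.symm ⟨w, hwD⟩) : Fin (m+1)) = w
          rw [OrderIso.apply_symm_apply]
  have hsum := sum_collapse (fun T => graftCount b c T.out) V
    (fun T v => IsoAbove T.out s v) (fun v => (W v).card) key
  calc ∑ T : TClass S (q+r+1), graftCount b c T.out * graftCount a T.out s
      = ∑ T : TClass S (q+r+1), graftCount b c T.out
          * (V.filter (fun v => IsoAbove T.out s v)).card := by
        exact Finset.sum_congr rfl (fun T _ => by rw [hgc T])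
    _ = ∑ v ∈ V, (W v).card := hsum
    _ = _ := by
        rw [Finset.card_eq_sum_card_fiberwise (f := Prod.fst)
          (t := V) (fun x hx => by
            rw [mem_coe, mem_filter] at hx
            rw [hV, mem_coe, mem_filter]
            exact ⟨mem_univ _, hx.2.1⟩)]
        apply Finset.sum_congr rfl
        intro v hv
        rw [hV, mem_filter] at hv
        apply card_nbij (fun w => (v, w))
        · intro w hw
          rw [hW, mem_coe, mem_filter] at hw
          rw [mem_coe, mem_filter, mem_filter]
          exact ⟨⟨mem_univ _, ⟨hv.2.1, hv.2.2⟩, hw.2⟩, rfl⟩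
        · intro x _ y _ h
          exact congrArg Prod.snd h
        · intro x hx
          simp only [mem_coe, mem_filter] at hx
          obtain ⟨⟨-, hpred⟩, hfst⟩ := hx
          subst hfst
          refine ⟨x.2, ?_, ?_⟩
          · rw [mem_coe, hW, mem_filter]
            exact ⟨mem_univ _, hpred.2⟩
          · exact Prod.mk.eta

/-- Claim B : the second sum counts pairs `(v,w)` with `v` strictly below `w`. -/
lemma claimB {p q r m : ℕ} (a : PreTree S p) (b : PreTree S q) (c : PreTree S r)
    (s : PreTree S m) (hm : m = p + q + r + 2) :
    (∑ T : TClass S (p+q+1), graftCount a b T.out * graftCount T.out c s)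
      = (univ.filter (fun vw : Fin (m+1) × Fin (m+1) =>
          (vw.2 ≠ 0 ∧ IsoAbove c s vw.2) ∧ vw.1 ≠ vw.2 ∧ desc s vw.2 vw.1 ∧
            IsoBelow a s vw.1 ∧ CompBelow b s vw.1 vw.2)).card := by
  classical
  set V : Finset (Fin (m+1)) := univ.filter (fun w => w ≠ 0 ∧ IsoAbove c s w) with hV
  set W : Fin (m+1) → Finset (Fin (m+1)) := fun w => univ.filter (fun v =>
    v ≠ w ∧ desc s w v ∧ IsoBelow a s v ∧ CompBelow b s v w) with hW
  have hgc : ∀ T : TClass S (p+q+1), graftCount T.out c s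
      = (V.filter (fun w => IsoBelow T.out s w)).card := by
    intro T
    unfold graftCount
    rw [hV, filter_filter]
    congr 1
    apply filter_congr
    intro x _
    constructor
    · rintro ⟨h1, h2, h3⟩; exact ⟨⟨h1, h3⟩, h2⟩
    · rintro ⟨⟨h1, h3⟩, h2⟩; exact ⟨h1, h2, h3⟩
  have key : ∀ w ∈ V, ∃ T0 : TClass S (p+q+1),
      (∀ T : TClass S (p+q+1), IsoBelow T.out s w ↔ T = T0) ∧
      graftCount a b T0.out = (W w).card := by
    intro w hw
    rw [hV, mem_filter] at hw
    obtain ⟨-, hw0, habo⟩ := hw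
    have hρD : w ∈ univ.filter (fun j => desc s w j) := by
      rw [mem_filter]
      exact ⟨mem_univ _, desc_refl s w⟩
    have hcB : (univ.filter (fun j => ¬ desc s w j)).card = r + 1 :=
      GIso_card ((isoAbove_iff_gIso c s w).mp habo)
    have hcard : (univ.filter (fun j => desc s w j)).card = (p+q+1) + 1 := by
      have htot := Finset.card_filter_add_card_filter_not
        (s := (univ : Finset (Fin (m+1)))) (p := fun j => desc s w j)
      rw [hcB, card_univ, Fintype.card_fin] at htot
      omega
    set R : RData S m (p+q+1) s := ⟨univ.filter (fun j => desc s w j), w, hρD,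
      fun j hj => desc_le s (by rw [mem_filter] at hj; exact hj.2),
      fun j hj hjw => by
        rw [mem_filter] at hj ⊢
        exact ⟨mem_univ _, desc_step s hj.2 hjw⟩,
      hcard⟩ with hR
    have hmemD : ∀ j, j ∈ R.D ↔ desc s w j := by
      intro j
      rw [hR]
      show j ∈ univ.filter (fun j => desc s w j) ↔ _
      rw [mem_filter]
      simp
    have hρw : R.ρ = w := rfl
    have hembw : (R.emb 0 : Fin (m+1)) = w := by rw [R.emb_zero, hρw]
    refine ⟨Quot.mk treeRel R.restr, ?_, ?_⟩
    · intro T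
      rw [tclass_eq_iff, R.treeRel_restr, isoBelow_iff_gIso, ← hρw]
      apply GIso_congr
      intro j
      rw [hmemD j, hρw]
    · rw [graftCount_rel_right a b (out_rel R.restr)]
      have hBel : ∀ v' : Fin (p+q+1+1), IsoBelow a R.restr v' ↔
          IsoBelow a s (R.emb v' : Fin (m+1)) := by
        intro v'
        rw [isoBelow_iff_gIso, isoBelow_iff_gIso]
        refine R.gIso_restr a v'
          (fun j => desc s (R.emb v' : Fin (m+1)) j)
          (fun j' => desc R.restr v' j') ?_ ?_ ?_
        · intro j'
          show desc R.restr v' j' ↔ desc s (R.emb v' : Fin (m+1)) (R.emb j' : Fin (m+1))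
          rw [R.desc_restr]
        · intro j hj
          refine (hmemD j).mpr (desc_trans s ?_ hj)
          have := R.desc_root (R.emb v').2
          rwa [hρw] at this
        · intro hP
          have h1 : desc s (R.emb v' : Fin (m+1)) w := by rwa [hρw] at hP
          have h2 : desc s w (R.emb v' : Fin (m+1)) := by
            have := R.desc_root (R.emb v').2
            rwa [hρw] at this
          have h3 : (R.emb v' : Fin (m+1)) = w := desc_antisymm s h1 h2
          apply R.emb.injective
          apply Subtype.ext
          rw [h3, hembw]
      have hAbo : ∀ v' : Fin (p+q+1+1), IsoAbove b R.restr v' ↔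
          CompBelow b s (R.emb v' : Fin (m+1)) w := by
        intro v'
        rw [isoAbove_iff_gIso]
        have := R.gIso_restr b 0
          (fun j => ¬ desc s (R.emb v' : Fin (m+1)) j ∧ desc s w j)
          (fun j' => ¬ desc R.restr v' j') ?_ ?_ ?_
        · rw [hembw] at this
          exact this
        · intro j'
          show ¬ desc R.restr v' j' ↔ (¬ desc s (R.emb v' : Fin (m+1)) (R.emb j' : Fin (m+1)) ∧
            desc s w (R.emb j' : Fin (m+1)))
          rw [R.desc_restr]
          constructor
          · intro h
            exact ⟨h, (hmemD _).mp (R.emb j').2⟩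
          · exact And.left
        · intro j hj
          exact (hmemD j).mpr hj.2
        · intro _; rfl
      unfold graftCount
      apply card_nbij (fun v' => (R.emb v' : Fin (m+1)))
      · intro v' hv'
        rw [mem_coe, mem_filter] at hv'
        obtain ⟨-, hv0, hvb, hva⟩ := hv'
        rw [hW]
        rw [mem_coe, mem_filter]
        refine ⟨mem_univ _, ?_, ?_, ?_, ?_⟩
        · intro hh
          exact R.emb_ne_rho hv0 (hh.trans hρw.symm)
        · exact (hmemD _).mp (R.emb v').2
        · exact (hBel v').mp hvb
        · exact (hAbo v').mp hva
      · intro x _ y _ hxy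
        exact R.emb.injective (Subtype.ext hxy)
      · intro v hv
        rw [hW] at hv
        simp only [coe_filter, Set.mem_setOf_eq, mem_univ, true_and] at hv
        obtain ⟨hvw, hvd, hvb, hva⟩ := hv
        have hvD : v ∈ R.D := (hmemD v).mpr hvd
        refine ⟨R.emb.symm ⟨v, hvD⟩, ?_, ?_⟩
        · have hcoe : (R.emb (R.emb.symm ⟨v, hvD⟩) : Fin (m+1)) = v := by
            rw [OrderIso.apply_symm_apply]
          simp only [coe_filter, Set.mem_setOf_eq, mem_univ, true_and]
          refine ⟨?_, ?_, ?_⟩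
          · intro hh
            apply hvw
            rw [← hcoe, hh, hembw]
          · rw [(hBel _), hcoe]
            exact hvb
          · rw [(hAbo _), hcoe]
            exact hva
        · show (R.emb (R.emb.symm ⟨v, hvD⟩) : Fin (m+1)) = v
          rw [OrderIso.apply_symm_apply]
  have hsum := sum_collapse (fun T => graftCount a b T.out) V
    (fun T w => IsoBelow T.out s w) (fun w => (W w).card) key
  calc ∑ T : TClass S (p+q+1), graftCount a b T.out * graftCount T.out c s
      = ∑ T : TClass S (p+q+1), graftCount a b T.out
          * (V.filter (fun w => IsoBelow T.out s w)).card := by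
        exact Finset.sum_congr rfl (fun T _ => by rw [hgc T])
    _ = ∑ w ∈ V, (W w).card := hsum
    _ = _ := by
        rw [Finset.card_eq_sum_card_fiberwise (f := Prod.snd)
          (t := V) (fun x hx => by
            rw [mem_coe, mem_filter] at hx
            rw [hV, mem_coe, mem_filter]
            exact ⟨mem_univ _, hx.2.1⟩)]
        apply Finset.sum_congr rfl
        intro w hw
        rw [hV, mem_filter] at hw
        apply card_nbij (fun v => (v, w))
        · intro v hv
          rw [hW, mem_coe, mem_filter] at hv
          rw [mem_coe, mem_filter, mem_filter]
          exact ⟨⟨mem_univ _, ⟨hw.2.1, hw.2.2⟩, hv.2⟩, rfl⟩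
        · intro x _ y _ h
          exact congrArg Prod.fst h
        · intro x hx
          simp only [mem_coe, mem_filter] at hx
          obtain ⟨⟨-, hpred⟩, hsnd⟩ := hx
          subst hsnd
          refine ⟨x.1, ?_, ?_⟩
          · rw [mem_coe, hW, mem_filter]
            exact ⟨mem_univ _, hpred.2⟩
          · exact Prod.mk.eta

end Stmt15Aux
namespace Stmt15Aux

open Finset

variable {S : Type} [Fintype S] [DecidableEq S]

lemma graftCount_eq_zero {p q m : ℕ} (a : PreTree S p) (b : PreTree S q) (t : PreTree S m)
    (h : m ≠ p + q + 1) : graftCount a b t = 0 := by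
  unfold graftCount
  rw [Finset.card_eq_zero, Finset.filter_eq_empty_iff]
  intro v _ hc
  obtain ⟨hv0, hbel, habo⟩ := hc
  apply h
  have h1 : (univ.filter (fun j => desc t v j)).card = p + 1 :=
    GIso_card ((isoBelow_iff_gIso a t v).mp hbel)
  have h2 : (univ.filter (fun j => ¬ desc t v j)).card = q + 1 :=
    GIso_card ((isoAbove_iff_gIso b t v).mp habo)
  have htot := Finset.card_filter_add_card_filter_not
    (s := (univ : Finset (Fin (m+1)))) (p := fun j => desc t v j)
  rw [h1, h2, card_univ, Fintype.card_fin] at htot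
  omega

lemma cutCount_eq_zero {p q r m : ℕ} (a : PreTree S p) (b : PreTree S q) (c : PreTree S r)
    (s : PreTree S m) (h : m ≠ p + q + r + 2) : cutCount a b c s = 0 := by
  unfold cutCount
  rw [Finset.card_eq_zero, Finset.filter_eq_empty_iff]
  intro vw _ hc
  obtain ⟨hv0, hw0, hvw, hwv, hbel, hbelw, hroot⟩ := hc
  apply h
  have h1 : (univ.filter (fun j => desc s vw.1 j)).card = p + 1 :=
    GIso_card ((isoBelow_iff_gIso a s vw.1).mp hbel)
  have h2 : (univ.filter (fun j => desc s vw.2 j)).card = q + 1 :=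
    GIso_card ((isoBelow_iff_gIso b s vw.2).mp hbelw)
  have h3 : (univ.filter (fun j => ¬ desc s vw.1 j ∧ ¬ desc s vw.2 j)).card = r + 1 :=
    GIso_card ((rootIso2_iff_gIso c s vw.1 vw.2).mp hroot)
  have t1 := Finset.card_filter_add_card_filter_not
    (s := (univ : Finset (Fin (m+1)))) (p := fun j => desc s vw.1 j)
  have t2 := Finset.card_filter_add_card_filter_not
    (s := univ.filter (fun j => ¬ desc s vw.1 j)) (p := fun j => desc s vw.2 j)
  rw [filter_filter, filter_filter] at t2
  have e1 : univ.filter (fun j => ¬ desc s vw.1 j ∧ desc s vw.2 j)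
      = univ.filter (fun j => desc s vw.2 j) := by
    apply filter_congr
    intro j _
    constructor
    · exact fun hh => hh.2
    · refine fun hh => ⟨fun hd => ?_, hh⟩
      rcases desc_comparable s hd hh with h' | h'
      · exact hvw h'
      · exact hwv h'
  rw [e1, h2, h3] at t2
  rw [h1, card_univ, Fintype.card_fin] at t1
  omega

lemma cutCount_comm {p q r m : ℕ} (a : PreTree S p) (b : PreTree S q) (c : PreTree S r)
    (s : PreTree S m) : cutCount a b c s = cutCount b a c s := by
  unfold cutCount
  apply card_nbij (fun x : Fin (m+1) × Fin (m+1) => (x.2, x.1))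
  · intro x hx
    rw [mem_coe, mem_filter] at hx ⊢
    obtain ⟨-, h1, h2, h3, h4, h5, h6, h7⟩ := hx
    exact ⟨mem_univ _, h2, h1, h4, h3, h6, h5, (rootIso2_comm c s x.1 x.2).mp h7⟩
  · intro x _ y _ h
    rw [Prod.ext_iff] at h ⊢
    exact ⟨h.2, h.1⟩
  · intro y hy
    simp only [mem_coe, mem_filter] at hy
    obtain ⟨-, h1, h2, h3, h4, h5, h6, h7⟩ := hy
    refine ⟨(y.2, y.1), ?_, ?_⟩
    · rw [mem_coe, mem_filter]
      exact ⟨mem_univ _, h2, h1, h4, h3, h6, h5, (rootIso2_comm c s y.1 y.2).mp h7⟩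
    · exact Prod.mk.eta

end Stmt15Aux

open Stmt15Aux Finset
/-- In the pre-Lie algebra of `S`-colored rooted trees with the grafting
product `▷`, for trees `a, b, c` the coefficient of a tree `s` in
`a ▷ (b ▷ c) - (a ▷ b) ▷ c` equals the number of admissible two-edge cuts of `s`
whose root component is `≅ c` and whose two remaining components are `≅ a` and `≅ b`
respectively.  In particular this coefficient is symmetric in `a` and `b`. -/
theorem stmt15 (S : Type) [Fintype S] [DecidableEq S] {p q r m : ℕ}
    (a : PreTree S p) (b : PreTree S q) (c : PreTree S r) (s : PreTree S m) :
    ((∑ T : TClass S (q + r + 1), (graftCount b c T.out * graftCount a T.out s : ℤ))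
      - ∑ T : TClass S (p + q + 1), (graftCount a b T.out * graftCount T.out c s : ℤ))
      = (cutCount a b c s : ℤ) ∧
    cutCount a b c s = cutCount b a c s := by
  classical
  refine ⟨?_, cutCount_comm a b c s⟩
  by_cases hm : m = p + q + r + 2
  · subst hm
    have hA := claimA a b c s rfl
    have hB := claimB a b c s rfl
    have hsplit := Finset.card_filter_add_card_filter_not
      (s := (univ.filter (fun vw : Fin (p+q+r+2+1) × Fin (p+q+r+2+1) =>
        (vw.1 ≠ 0 ∧ IsoBelow a s vw.1) ∧ vw.2 ≠ 0 ∧ ¬ desc s vw.1 vw.2 ∧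
          CompBelow b s vw.1 vw.2 ∧ RootIso2 c s vw.1 vw.2)))
      (p := fun vw => desc s vw.2 vw.1)
    rw [Finset.filter_filter, Finset.filter_filter] at hsplit
    have e2 : (univ.filter (fun vw : Fin (p+q+r+2+1) × Fin (p+q+r+2+1) =>
        ((vw.1 ≠ 0 ∧ IsoBelow a s vw.1) ∧ vw.2 ≠ 0 ∧ ¬ desc s vw.1 vw.2 ∧
          CompBelow b s vw.1 vw.2 ∧ RootIso2 c s vw.1 vw.2) ∧ desc s vw.2 vw.1))
        = (univ.filter (fun vw : Fin (p+q+r+2+1) × Fin (p+q+r+2+1) =>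
          (vw.2 ≠ 0 ∧ IsoAbove c s vw.2) ∧ vw.1 ≠ vw.2 ∧ desc s vw.2 vw.1 ∧
            IsoBelow a s vw.1 ∧ CompBelow b s vw.1 vw.2)) := by
      apply filter_congr
      intro x _
      constructor
      · rintro ⟨⟨⟨hv0, hbel⟩, hw0, hnd, hcomp, hroot⟩, hdesc⟩
        refine ⟨⟨hw0, (rootIso2_iff_isoAbove c s hdesc).mp hroot⟩, ?_, hdesc, hbel, hcomp⟩
        intro he
        apply hnd
        rw [he]
        exact desc_refl s x.2
      · rintro ⟨⟨hw0, habo⟩, hne, hdesc, hbel, hcomp⟩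
        have hv0 : x.1 ≠ 0 := by
          intro he
          apply hw0
          rw [he] at hdesc
          exact (desc_zero_iff s x.2).mp hdesc
        have hnd : ¬ desc s x.1 x.2 := by
          intro hd
          exact hne (desc_antisymm s hd hdesc)
        exact ⟨⟨⟨hv0, hbel⟩, hw0, hnd, hcomp,
          (rootIso2_iff_isoAbove c s hdesc).mpr habo⟩, hdesc⟩
    have e3 : (univ.filter (fun vw : Fin (p+q+r+2+1) × Fin (p+q+r+2+1) =>
        ((vw.1 ≠ 0 ∧ IsoBelow a s vw.1) ∧ vw.2 ≠ 0 ∧ ¬ desc s vw.1 vw.2 ∧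
          CompBelow b s vw.1 vw.2 ∧ RootIso2 c s vw.1 vw.2) ∧ ¬ desc s vw.2 vw.1))
        = (univ.filter (fun vw : Fin (p+q+r+2+1) × Fin (p+q+r+2+1) =>
          vw.1 ≠ 0 ∧ vw.2 ≠ 0 ∧ ¬ desc s vw.1 vw.2 ∧ ¬ desc s vw.2 vw.1 ∧
            IsoBelow a s vw.1 ∧ IsoBelow b s vw.2 ∧ RootIso2 c s vw.1 vw.2)) := by
      apply filter_congr
      intro x _
      constructor
      · rintro ⟨⟨⟨hv0, hbel⟩, hw0, hnd, hcomp, hroot⟩, hnd2⟩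
        exact ⟨hv0, hw0, hnd, hnd2, hbel,
          (compBelow_iff_isoBelow b s hnd hnd2).mp hcomp, hroot⟩
      · rintro ⟨hv0, hw0, hnd, hnd2, hbel, hbelw, hroot⟩
        exact ⟨⟨⟨hv0, hbel⟩, hw0, hnd,
          (compBelow_iff_isoBelow b s hnd hnd2).mpr hbelw, hroot⟩, hnd2⟩
    rw [e2, e3] at hsplit
    have hcut : cutCount a b c s
        = (univ.filter (fun vw : Fin (p+q+r+2+1) × Fin (p+q+r+2+1) =>
          vw.1 ≠ 0 ∧ vw.2 ≠ 0 ∧ ¬ desc s vw.1 vw.2 ∧ ¬ desc s vw.2 vw.1 ∧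
            IsoBelow a s vw.1 ∧ IsoBelow b s vw.2 ∧ RootIso2 c s vw.1 vw.2)).card := rfl
    have hcast1 : (∑ T : TClass S (q + r + 1),
        (graftCount b c T.out * graftCount a T.out s : ℤ))
        = ((∑ T : TClass S (q + r + 1),
            graftCount b c T.out * graftCount a T.out s : ℕ) : ℤ) := by
      push_cast
      rfl
    have hcast2 : (∑ T : TClass S (p + q + 1),
        (graftCount a b T.out * graftCount T.out c s : ℤ))
        = ((∑ T : TClass S (p + q + 1),
            graftCount a b T.out * graftCount T.out c s : ℕ) : ℤ) := by
      push_cast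
      rfl
    rw [hcast1, hcast2, hA, hB, ← hsplit, hcut]
    push_cast
    ring
  · have hz1 : ∀ T : TClass S (q + r + 1), graftCount a T.out s = 0 :=
      fun T => graftCount_eq_zero a T.out s (by omega)
    have hz2 : ∀ T : TClass S (p + q + 1), graftCount T.out c s = 0 :=
      fun T => graftCount_eq_zero T.out c s (by omega)
    rw [cutCount_eq_zero a b c s hm]
    simp [hz1, hz2]
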